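/- Let s ≥ 4 be an integer and let λ be an s-minimal biliaison type. If q_s(λ) ≤ (s−1)², then λ = ∅, λ = (1), or λ = (s−1). If (s−1)² < q_s(λ) ≤ s², then either s = 4 and λ = (2) or λ = (1, 3), or s = 5 and λ = (2) or λ = (3). -/

import Mathlib

/-- An `s`-minimal biliaison type: a strictly increasing finite sequence of
positive integers, all strictly less than `s` (the empty sequence is allowed). -/
def SMinimal (s : ℕ) (l : List ℕ) : Prop :=
  l.Chain' (· < ·) ∧ ∀ k ∈ l, 0 < k ∧ k < s

/-- The quadratic form `q_s(λ) = Σ_i k_i(s−1)(s−k_i) − 2 Σ_{i<j} k_i(s−k_j)`. -/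
def qform (s : ℕ) (l : List ℕ) : ℤ :=
  (∑ i : Fin l.length, (l.get i : ℤ) * ((s : ℤ) - 1) * ((s : ℤ) - l.get i))
  - 2 * ∑ i : Fin l.length, ∑ j : Fin l.length,
      if (i : ℕ) < (j : ℕ) then (l.get i : ℤ) * ((s : ℤ) - l.get j) else 0

/-- The `s`-dual `λ′ = (s−k_u, …, s−k_1)` of a biliaison type. -/
def sdual (s : ℕ) (l : List ℕ) : List ℕ := (l.map (fun k => s - k)).reverse

lemma qform_nil (s : ℕ) : qform s [] = 0 := by simp [qform]

lemma qform_single (s k : ℕ) : qform s [k] = (k:ℤ) * ((s:ℤ)-1) * ((s:ℤ)-k) := by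
  norm_num [qform, Fin.sum_univ_one]

lemma qform_cons (s k : ℕ) (l : List ℕ) :
    qform s (k :: l) = qform s l + (k : ℤ) * ((s : ℤ) - 1) * ((s : ℤ) - k)
      - 2 * (k : ℤ) * ((l.length : ℤ) * s - (l.sum : ℤ)) := by
  have hsum : (∑ j : Fin l.length, ((s : ℤ) - (l[(j : ℕ)] : ℤ)))
      = (l.length : ℤ) * s - (l.sum : ℤ) := by
    induction l with
    | nil => simp
    | cons a t ih =>
      simp only [List.length_cons, Fin.sum_univ_succ, List.getElem_cons_zero, Fin.val_zero,
        Fin.val_succ, List.getElem_cons_succ, ih, List.sum_cons]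
      push_cast; ring
  have hsum2 : (∑ x : Fin l.length, (k : ℤ) * ((s : ℤ) - (l[(x : ℕ)] : ℤ)))
      = (k : ℤ) * ((l.length : ℤ) * s - (l.sum : ℤ)) := by
    rw [← Finset.mul_sum, hsum]
  simp only [qform, List.length_cons, Fin.sum_univ_succ, List.get_eq_getElem, Fin.val_zero,
    Fin.val_succ, List.getElem_cons_zero, List.getElem_cons_succ, lt_self_iff_false, if_false,
    Nat.succ_lt_succ_iff, Nat.zero_lt_succ, if_true, Nat.not_lt_zero, zero_add]
  linear_combination (-2 : ℤ) * hsum2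

def Hfun (s : ℕ) : ℕ → ℤ
  | 0 => 0
  | (u+1) => Hfun s u + ((s:ℤ) - 1 - u)^2 + u

lemma Hfun_le (s u : ℕ) : ∀ m : ℕ, Hfun s u ≤ Hfun s (u + m) := by
  intro m
  induction m with
  | zero => exact le_refl _
  | succ m ih =>
    have : Hfun s (u + (m+1)) = Hfun s (u+m) + ((s:ℤ) - 1 - (u+m))^2 + (u+m : ℕ) := rfl
    rw [this]
    have h1 : (0:ℤ) ≤ ((s:ℤ) - 1 - (u+m))^2 := sq_nonneg _
    have h2 : (0:ℤ) ≤ ((u+m : ℕ) : ℤ) := Int.natCast_nonneg _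
    linarith

lemma sum_ub (s : ℕ) (l : List ℕ) : ∀ (k : ℕ), l.Pairwise (· < ·) → (∀ j ∈ l, j < s) →
    (∀ j ∈ l, k < j) →
    2 * ((l.length : ℤ) * s - (l.sum : ℤ)) ≤
      2 * l.length * ((s:ℤ) - k) - l.length * (l.length + 1) := by
  induction l with
  | nil => intro k _ _ _; simp
  | cons a t ih =>
    intro k hp hbs hbk
    rw [List.pairwise_cons] at hp
    have iht := ih a hp.2 (fun j hj => hbs j (List.mem_cons_of_mem _ hj)) hp.1
    have ha : (k:ℤ) + 1 ≤ (a:ℤ) := by exact_mod_cast hbk a (List.mem_cons_self)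
    have hL : (0:ℤ) ≤ (t.length : ℤ) := Int.natCast_nonneg _
    have key : (0:ℤ) ≤ ((t.length:ℤ) + 1) * ((a:ℤ) - k - 1) :=
      mul_nonneg (by linarith) (by linarith)
    simp only [List.length_cons, List.sum_cons]
    push_cast at iht ⊢
    nlinarith [iht, key]

lemma len_ub (s : ℕ) (l : List ℕ) : ∀ (k : ℕ), l.Pairwise (· < ·) → (∀ j ∈ l, j < s) →
    (∀ j ∈ l, k < j) → k < s → k + l.length < s := by
  induction l with
  | nil => intro k _ _ _ h; simpa using h
  | cons a t ih =>
    intro k hp hbs hbk hk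
    rw [List.pairwise_cons] at hp
    have := ih a hp.2 (fun j hj => hbs j (List.mem_cons_of_mem _ hj)) hp.1
      (hbs a (List.mem_cons_self))
    have := hbk a (List.mem_cons_self)
    simp only [List.length_cons]
    omega

lemma q_ge_H (s : ℕ) (l : List ℕ) (hp : l.Pairwise (· < ·))
    (hb : ∀ j ∈ l, 0 < j ∧ j < s) : Hfun s l.length ≤ qform s l := by
  induction l with
  | nil => simp [qform_nil, Hfun]
  | cons k t ih =>
    rw [List.pairwise_cons] at hp
    have ht := ih hp.2 (fun j hj => hb j (List.mem_cons_of_mem _ hj))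
    have hsum := sum_ub s t k hp.2 (fun j hj => (hb j (List.mem_cons_of_mem _ hj)).2) hp.1
    have hlen := len_ub s t k hp.2 (fun j hj => (hb j (List.mem_cons_of_mem _ hj)).2) hp.1
      (hb k (List.mem_cons_self)).2
    set L : ℤ := (t.length : ℤ) with hLdef
    have hL0 : (0:ℤ) ≤ L := Int.natCast_nonneg _
    have hk1 : (1:ℤ) ≤ (k:ℤ) := by exact_mod_cast (hb k (List.mem_cons_self)).1
    have hkL : (k:ℤ) + L ≤ (s:ℤ) - 1 := by
      have : ((k + t.length : ℕ) : ℤ) + 1 ≤ (s:ℤ) := by exact_mod_cast hlen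
      push_cast at this; linarith
    have t1 : (0:ℤ) ≤ L * (((k:ℤ)-1) * ((k:ℤ)+1)) :=
      mul_nonneg hL0 (mul_nonneg (by linarith) (by linarith))
    have t2 : (0:ℤ) ≤ ((s:ℤ)-1-L-k) * (((k:ℤ)-1) * ((k:ℤ) + ((s:ℤ)-1-L-k))) :=
      mul_nonneg (by linarith) (mul_nonneg (by linarith) (by linarith))
    have incr : ((s:ℤ)-1-L)^2 + L ≤ (k:ℤ)*(((s:ℤ)-k)*((s:ℤ)-1-2*L) + L*(L+1)) := by
      nlinarith [t1, t2]
    have khsum := mul_le_mul_of_nonneg_left hsum (by linarith : (0:ℤ) ≤ (k:ℤ))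
    have hH : Hfun s (k :: t).length = Hfun s t.length + ((s:ℤ) - 1 - L)^2 + L := rfl
    rw [qform_cons, hH]
    nlinarith [ht, incr, khsum]

lemma Hfun_two (s : ℕ) : Hfun s 2 = ((s:ℤ)-1)^2 + ((s:ℤ)-2)^2 + 1 := by
  show (0 + ((s:ℤ) - 1 - (0:ℕ))^2 + (0:ℕ)) + ((s:ℤ) - 1 - (1:ℕ))^2 + (1:ℕ) = _
  push_cast; ring

/-- The final claims of Corollary 8.9: if `q_s(λ) ≤ (s−1)²` then `λ` is empty, `(1)`
or `(s−1)`; and if `(s−1)² < q_s(λ) ≤ s²` then `s = 4` and `λ = (2)` or `(1,3)`, or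
`s = 5` and `λ = (2)` or `(3)`. -/
theorem stmt10 (s : ℕ) (hs : 4 ≤ s) (l : List ℕ) (hl : SMinimal s l) :
    (qform s l ≤ ((s : ℤ) - 1) ^ 2 → l = [] ∨ l = [1] ∨ l = [s - 1]) ∧
    (((s : ℤ) - 1) ^ 2 < qform s l → qform s l ≤ (s : ℤ) ^ 2 →
      (s = 4 ∧ (l = [2] ∨ l = [1, 3])) ∨ (s = 5 ∧ (l = [2] ∨ l = [3]))) := by
  obtain ⟨hc, hb⟩ := hl
  have hp : l.Pairwise (· < ·) := List.isChain_iff_pairwise.mp hc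
  have hs4 : (4:ℤ) ≤ (s:ℤ) := by exact_mod_cast hs
  rcases l with _ | ⟨k, _ | ⟨k2, t⟩⟩
  · refine ⟨fun _ => Or.inl rfl, fun h1 _ => absurd h1 ?_⟩
    rw [qform_nil]; nlinarith
  · -- singleton [k]
    obtain ⟨hk0, hks⟩ := hb k (List.mem_cons_self)
    have hk1 : (1:ℤ) ≤ (k:ℤ) := by exact_mod_cast hk0
    have hksz : (k:ℤ) ≤ (s:ℤ) - 1 := by omega
    rw [qform_single]
    constructor
    · intro h
      by_cases h1 : k = 1
      · exact Or.inr (Or.inl (by rw [h1]))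
      by_cases h2 : k = s - 1
      · exact Or.inr (Or.inr (by rw [h2]))
      exfalso
      have hk2 : (2:ℤ) ≤ (k:ℤ) := by omega
      have hks2 : (k:ℤ) ≤ (s:ℤ) - 2 := by omega
      nlinarith [mul_nonneg (by linarith : (0:ℤ) ≤ (k:ℤ)-2) (by linarith : (0:ℤ) ≤ (s:ℤ)-2-k)]
    · intro h1 h2
      have hne1 : k ≠ 1 := by
        rintro rfl; push_cast at h1; nlinarith
      have hne2 : k ≠ s - 1 := by
        rintro rfl
        have hz : ((s - 1 : ℕ) : ℤ) = (s:ℤ) - 1 := by omega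
        rw [hz] at h1; nlinarith
      have hk2 : (2:ℤ) ≤ (k:ℤ) := by omega
      have hks2 : (k:ℤ) ≤ (s:ℤ) - 2 := by omega
      have hs5 : s ≤ 5 := by
        by_contra hc6
        have hs6 : (6:ℤ) ≤ (s:ℤ) := by omega
        nlinarith [mul_nonneg (by linarith : (0:ℤ) ≤ (k:ℤ)-2) (by linarith : (0:ℤ) ≤ (s:ℤ)-2-k),
          mul_nonneg (by linarith : (0:ℤ) ≤ (s:ℤ)-6) (by linarith : (0:ℤ) ≤ (s:ℤ))]
      have hk25 : 2 ≤ k ∧ k ≤ s - 2 := by omega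
      interval_cases s
      · have hk : k = 2 := by omega
        exact Or.inl ⟨rfl, Or.inl (by rw [hk])⟩
      · have hk : k = 2 ∨ k = 3 := by omega
        rcases hk with hk | hk
        · exact Or.inr ⟨rfl, Or.inl (by rw [hk])⟩
        · exact Or.inr ⟨rfl, Or.inr (by rw [hk])⟩
  · -- length ≥ 2
    have hq := q_ge_H s (k :: k2 :: t) hp hb
    have hlen : (k :: k2 :: t).length = 2 + t.length := by simp; omega
    have hmon := Hfun_le s 2 t.length
    rw [← hlen] at hmon
    have hH2 := Hfun_two s
    constructor
    · intro h
      exfalso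
      nlinarith [sq_nonneg ((s:ℤ)-2)]
    · intro h1 h2
      have hs4' : s = 4 := by
        by_contra hne
        have hs5 : (5:ℤ) ≤ (s:ℤ) := by omega
        nlinarith [mul_nonneg (by linarith : (0:ℤ) ≤ (s:ℤ)-5) (by linarith : (0:ℤ) ≤ (s:ℤ)-1)]
      subst hs4'
      rcases t with _ | ⟨a, t'⟩
      · -- l = [k, k2]
        obtain ⟨hk0, hks⟩ := hb k (by simp)
        obtain ⟨hk20, hk2s⟩ := hb k2 (by simp)
        have h12 : k < k2 := by
          have := (List.pairwise_cons.mp hp).1 k2 (by simp)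
          exact this
        have hcase : (k = 1 ∧ k2 = 2) ∨ (k = 1 ∧ k2 = 3) ∨ (k = 2 ∧ k2 = 3) := by omega
        rcases hcase with ⟨ha, hb'⟩ | ⟨ha, hb'⟩ | ⟨ha, hb'⟩ <;> subst ha <;> subst hb'
        · exfalso
          have : qform 4 [1, 2] = 17 := by decide
          rw [this] at h2; norm_num at h2
        · exact Or.inl ⟨rfl, Or.inr rfl⟩
        · exfalso
          have : qform 4 [2, 3] = 17 := by decide
          rw [this] at h2; norm_num at h2
      · -- length ≥ 3
        exfalso
        have hm3 := Hfun_le 4 3 t'.length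
        have hlen3 : (k :: k2 :: a :: t').length = 3 + t'.length := by simp; omega
        rw [← hlen3] at hm3
        have hH3 : Hfun 4 3 = 17 := by decide
        rw [hH3] at hm3
        have : (17:ℤ) ≤ qform 4 (k :: k2 :: a :: t') := le_trans hm3 hq
        norm_num at h2
        linarith
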